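/- If G is a finite abelian group, then the rough boundary algebra 𝔇ⁿ_rough and the smooth boundary algebra 𝔇ⁿ_smooth are isomorphic as ℂ-algebras (both being isomorphic to the direct sum of |G| copies of M_{|G|^{n−1}}(ℂ)). -/

import Mathlib

noncomputable section

open scoped BigOperators

/-- The Hilbert space `H_n = ℂ[G]^{⊗ n}`, realized as functions `G^n → ℂ`;
the basis ket `|g₁,…,g_n⟩` is the indicator function of `(g₁,…,g_n)`. -/
abbrev Hn (G : Type) (n : ℕ) : Type := (Fin n → G) → ℂ

variable (G : Type) [CommGroup G] [Fintype G] [DecidableEq G] (n : ℕ)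

/-- Diagonal operator with diagonal entries `c` (in the ket basis). -/
def diagOp (c : (Fin n → G) → ℂ) : Module.End ℂ (Hn G n) where
  toFun f := fun x => c x * f x
  map_add' f g := by funext x; simp only [Pi.add_apply]; ring
  map_smul' r f := by
    funext x
    simp only [Pi.smul_apply, smul_eq_mul, RingHom.id_apply]
    ring

/-- The operator sending the ket `|y⟩` to the ket `|σ y⟩`, where `τ = σ⁻¹`. -/
def permOp (τ : (Fin n → G) → (Fin n → G)) : Module.End ℂ (Hn G n) :=
  LinearMap.funLeft ℂ ℂ τ

/-- `P^h_i`: projection onto kets whose `i`-th label equals `h`. -/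
def Pop (i : Fin n) (h : G) : Module.End ℂ (Hn G n) :=
  diagOp G n fun x => if x i = h then 1 else 0

/-- `Q̃^{(g)}` at sites `i` and `j` (used with `j = i + 1`):
`|…, g_i, g_j, …⟩ ↦ |…, g_i g⁻¹, g g_j, …⟩`. -/
def Qop (i j : Fin n) (g : G) : Module.End ℂ (Hn G n) :=
  permOp G n fun x =>
    Function.update (Function.update x i (x i * g)) j (g⁻¹ * x j)

/-- The rough boundary algebra `𝔇ⁿ_rough`. -/
def DRough : Subalgebra ℂ (Module.End ℂ (Hn G n)) :=
  Algebra.adjoin ℂ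
    ({T | ∃ (i : Fin n) (h : G), T = Pop G n i h} ∪
     {T | ∃ (i j : Fin n) (g : G), (i : ℕ) + 1 = (j : ℕ) ∧ T = Qop G n i j g})

/-- `R^g_i`: right translation at site `i`, `|…, g_i, …⟩ ↦ |…, g_i g, …⟩`. -/
def Rop (i : Fin n) (g : G) : Module.End ℂ (Hn G n) :=
  permOp G n fun x => Function.update x i (x i * g⁻¹)

/-- `S̃^{(h)}` at sites `i` and `j` (used with `j = i + 1`): the projection onto
kets with `g_i⁻¹ g_j = h`. -/
def Sop (i j : Fin n) (h : G) : Module.End ℂ (Hn G n) :=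
  diagOp G n fun x => if (x i)⁻¹ * x j = h then 1 else 0

/-- The smooth boundary algebra `𝔇ⁿ_smooth`. -/
def DSmooth : Subalgebra ℂ (Module.End ℂ (Hn G n)) :=
  Algebra.adjoin ℂ
    ({T | ∃ (i : Fin n) (g : G), T = Rop G n i g} ∪
     {T | ∃ (i j : Fin n) (h : G), (i : ℕ) + 1 = (j : ℕ) ∧ T = Sop G n i j h})

section Stmt14Aux
set_option linter.unusedSectionVars false

namespace Stmt14Aux

/-- A nondegenerate bicharacter on a finite abelian group with values in `ℂ`. -/
structure Bichar (G : Type) [CommGroup G] [Fintype G] : Type where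
  chi : G → G → ℂ
  mul_left : ∀ a b c, chi (a * b) c = chi a c * chi b c
  mul_right : ∀ a b c, chi a (b * c) = chi a b * chi a c
  one_left : ∀ b, chi 1 b = 1
  one_right : ∀ a, chi a 1 = 1
  sumL : ∀ b : G, b ≠ 1 → ∑ a : G, chi a b = 0
  sumR : ∀ a : G, a ≠ 1 → ∑ b : G, chi a b = 0

variable {G : Type} [CommGroup G] [Fintype G] [DecidableEq G]

namespace Bichar

variable (B : Bichar G)

lemma chi_mul_inv_right (a b : G) : B.chi a b * B.chi a b⁻¹ = 1 := by
  rw [← B.mul_right, mul_inv_cancel, B.one_right]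

lemma chi_mul_inv_left (a b : G) : B.chi a b * B.chi a⁻¹ b = 1 := by
  rw [← B.mul_left, mul_inv_cancel, B.one_left]

lemma chi_ne_zero (a b : G) : B.chi a b ≠ 0 :=
  left_ne_zero_of_mul_eq_one (B.chi_mul_inv_right a b)

lemma chi_inv_swap (a b : G) : B.chi a⁻¹ b = B.chi a b⁻¹ := by
  have h1 := B.chi_mul_inv_left a b
  have h2 := B.chi_mul_inv_right a b
  exact mul_left_cancel₀ (B.chi_ne_zero a b) (h1.trans h2.symm)

end Bichar

/-- The translation trick: a multiplicative function somewhere `≠ 1` sums to zero. -/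
lemma sum_trick {H : Type*} [CommGroup H] [Fintype H] (F : H → ℂ)
    (hF : ∀ a c, F (a * c) = F a * F c) {a₀ : H} (h : F a₀ ≠ 1) :
    ∑ a : H, F a = 0 := by
  have key : F a₀ * ∑ a : H, F a = ∑ a : H, F a := by
    rw [Finset.mul_sum]
    exact Fintype.sum_bijective (fun a => a₀ * a) (Group.mulLeft_bijective a₀) _ _
      (fun a => (hF a₀ a).symm)
  have : (F a₀ - 1) * ∑ a : H, F a = 0 := by ring_nf; linear_combination key
  rcases mul_eq_zero.mp this with h' | h'
  · exact absurd (sub_eq_zero.mp h') h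
  · exact h'

namespace Bichar

variable (B : Bichar G)

lemma exL {b : G} (hb : b ≠ 1) : ∃ a : G, B.chi a b ≠ 1 := by
  by_contra hall
  push_neg at hall
  have := B.sumL b hb
  rw [Finset.sum_congr rfl (fun a _ => hall a)] at this
  simp [Finset.card_univ] at this

lemma exR {a : G} (ha : a ≠ 1) : ∃ b : G, B.chi a b ≠ 1 := by
  by_contra hall
  push_neg at hall
  have := B.sumR a ha
  rw [Finset.sum_congr rfl (fun b _ => hall b)] at this
  simp [Finset.card_univ] at this

lemma sumL' (b : G) : ∑ a : G, B.chi a b = if b = 1 then (Fintype.card G : ℂ) else 0 := by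
  split_ifs with hb
  · subst hb; simp [B.one_right, Finset.card_univ]
  · exact B.sumL b hb

lemma sumR' (a : G) : ∑ b : G, B.chi a b = if a = 1 then (Fintype.card G : ℂ) else 0 := by
  split_ifs with ha
  · subst ha; simp [B.one_left, Finset.card_univ]
  · exact B.sumR a ha

variable {n : ℕ}

/-- n-dimensional orthogonality, summing over the first slot. -/
lemma orthoL (d : Fin n → G) :
    ∑ x : Fin n → G, ∏ i, B.chi (x i) (d i) =
      if d = 1 then (Fintype.card (Fin n → G) : ℂ) else 0 := by
  split_ifs with hd
  · subst hd
    simp [B.one_right, Finset.card_univ]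
  · have : ∃ i₀, d i₀ ≠ 1 := by
      by_contra hall; push_neg at hall; exact hd (funext hall)
    obtain ⟨i₀, hi₀⟩ := this
    obtain ⟨a₀, ha₀⟩ := B.exL hi₀
    refine sum_trick _ (fun x z => ?_) (a₀ := Pi.mulSingle i₀ a₀) ?_
    · rw [← Finset.prod_mul_distrib]
      exact Finset.prod_congr rfl fun i _ => by rw [Pi.mul_apply, B.mul_left]
    · rw [Finset.prod_eq_single i₀ (fun i _ hi => by
        rw [Pi.mulSingle_apply, if_neg hi, B.one_left]) (by simp)]
      simpa using ha₀

lemma orthoR (d : Fin n → G) :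
    ∑ y : Fin n → G, ∏ i, B.chi (d i) (y i) =
      if d = 1 then (Fintype.card (Fin n → G) : ℂ) else 0 := by
  split_ifs with hd
  · subst hd
    simp [B.one_left, Finset.card_univ]
  · have : ∃ i₀, d i₀ ≠ 1 := by
      by_contra hall; push_neg at hall; exact hd (funext hall)
    obtain ⟨i₀, hi₀⟩ := this
    obtain ⟨b₀, hb₀⟩ := B.exR hi₀
    refine sum_trick _ (fun y z => ?_) (a₀ := Pi.mulSingle i₀ b₀) ?_
    · rw [← Finset.prod_mul_distrib]
      exact Finset.prod_congr rfl fun i _ => by rw [Pi.mul_apply, B.mul_right]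
    · rw [Finset.prod_eq_single i₀ (fun i _ hi => by
        rw [Pi.mulSingle_apply, if_neg hi, B.one_right]) (by simp)]
      simpa using hb₀

end Bichar

/-- Existence of a nondegenerate bicharacter, from finite abelian duality. -/
lemma exists_bichar : Nonempty (Bichar G) := by
  have hexp : NeZero (Monoid.exponent G) := ⟨Monoid.exponent_ne_zero_of_finite⟩
  have : NeZero ((Monoid.exponent G : ℂ)) :=
    ⟨by exact_mod_cast (Nat.cast_ne_zero (R := ℂ)).mpr hexp.out⟩
  obtain ⟨e⟩ := CommGroup.monoidHom_mulEquiv_of_hasEnoughRootsOfUnity G ℂ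
  refine ⟨⟨fun a b => ((e.symm a) b : ℂ), ?_, ?_, ?_, ?_, ?_, ?_⟩⟩
  · intro a b c; rw [map_mul e.symm]; push_cast [MonoidHom.mul_apply]; ring
  · intro a b c; rw [map_mul]; push_cast; ring
  · intro b; rw [map_one e.symm]; simp
  · intro a; rw [map_one]; simp
  · intro b hb
    obtain ⟨φ, hφ⟩ := CommGroup.exists_apply_ne_one_of_hasEnoughRootsOfUnity G ℂ hb
    refine sum_trick _ (fun a c => by
      rw [map_mul e.symm]
      push_cast [MonoidHom.mul_apply]
      ring) (a₀ := e φ) ?_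
    rw [MulEquiv.symm_apply_apply]
    exact fun h => hφ (Units.ext (by simpa using h))
  · intro a ha
    have hne : e.symm a ≠ 1 := fun h => ha (by simpa using congrArg e h)
    have hex : ∃ b, (e.symm a) b ≠ 1 := by
      by_contra hall; push_neg at hall
      exact hne (MonoidHom.ext fun b => by simpa using hall b)
    obtain ⟨b₀, hb₀⟩ := hex
    refine sum_trick _ (fun b c => by rw [map_mul]; push_cast; ring) (a₀ := b₀) ?_
    exact fun h => hb₀ (Units.ext (by simpa using h))

/-! ### The Fourier transform on `Hn G n` -/

variable (B : Bichar G) (n : ℕ)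

/-- The Fourier kernel. -/
def w (x y : Fin n → G) : ℂ := ∏ i, B.chi (x i) (y i)

variable {n}

lemma w_updR (x y : Fin n → G) (i : Fin n) (b : G) :
    w B n x (Function.update y i b) = B.chi (x i) (b * (y i)⁻¹) * w B n x y := by
  unfold w
  have h1 : (fun k => B.chi (x k) (Function.update y i b k)) =
      Function.update (fun k => B.chi (x k) (y k)) i (B.chi (x i) b) := by
    funext k
    rcases eq_or_ne k i with rfl | hk
    · simp
    · simp [Function.update_of_ne hk]
  calc ∏ k, B.chi (x k) (Function.update y i b k)
      = ∏ k, Function.update (fun k => B.chi (x k) (y k)) i (B.chi (x i) b) k := by rw [h1]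
    _ = B.chi (x i) b * ∏ k ∈ Finset.univ \ {i}, B.chi (x k) (y k) :=
        Finset.prod_update_of_mem (Finset.mem_univ i) _ _
    _ = B.chi (x i) (b * (y i)⁻¹) * ∏ k, B.chi (x k) (y k) := by
        rw [Finset.prod_eq_mul_prod_sdiff_singleton_of_mem (Finset.mem_univ i)
          (fun k => B.chi (x k) (y k))]
        rw [← mul_assoc, ← B.mul_right]
        congr 2
        group
  
lemma w_updL (x y : Fin n → G) (i : Fin n) (a : G) :
    w B n (Function.update x i a) y = B.chi (a * (x i)⁻¹) (y i) * w B n x y := by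
  unfold w
  have h1 : (fun k => B.chi (Function.update x i a k) (y k)) =
      Function.update (fun k => B.chi (x k) (y k)) i (B.chi a (y i)) := by
    funext k
    rcases eq_or_ne k i with rfl | hk
    · simp
    · simp [Function.update_of_ne hk]
  calc ∏ k, B.chi (Function.update x i a k) (y k)
      = ∏ k, Function.update (fun k => B.chi (x k) (y k)) i (B.chi a (y i)) k := by rw [h1]
    _ = B.chi a (y i) * ∏ k ∈ Finset.univ \ {i}, B.chi (x k) (y k) :=
        Finset.prod_update_of_mem (Finset.mem_univ i) _ _
    _ = B.chi (a * (x i)⁻¹) (y i) * ∏ k, B.chi (x k) (y k) := by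
        rw [Finset.prod_eq_mul_prod_sdiff_singleton_of_mem (Finset.mem_univ i)
          (fun k => B.chi (x k) (y k))]
        rw [← mul_assoc, ← B.mul_left]
        congr 2
        group

lemma w_mul_left (x z y : Fin n → G) : w B n x y * w B n z y = w B n (x * z) y := by
  unfold w
  rw [← Finset.prod_mul_distrib]
  exact Finset.prod_congr rfl fun i _ => by rw [Pi.mul_apply, B.mul_left]

lemma w_mul_right (x y z : Fin n → G) : w B n x y * w B n x z = w B n x (y * z) := by
  unfold w
  rw [← Finset.prod_mul_distrib]
  exact Finset.prod_congr rfl fun i _ => by rw [Pi.mul_apply, B.mul_right]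

lemma w_inv_swap (x y : Fin n → G) : w B n x⁻¹ y = w B n x y⁻¹ := by
  unfold w
  exact Finset.prod_congr rfl fun i _ => by rw [Pi.inv_apply, Pi.inv_apply, B.chi_inv_swap]

variable (n)

/-- The Fourier transform. -/
def Fop : Module.End ℂ (Hn G n) where
  toFun f := fun x => ∑ y, w B n x y * f y
  map_add' f g := by
    funext x
    simp [Pi.add_apply, mul_add, Finset.sum_add_distrib]
  map_smul' r f := by
    funext x
    simp only [Pi.smul_apply, smul_eq_mul, RingHom.id_apply, Finset.mul_sum]
    exact Finset.sum_congr rfl fun y _ => by ring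

/-- The inverse Fourier transform. -/
def Gop : Module.End ℂ (Hn G n) where
  toFun f := fun y => (Fintype.card (Fin n → G) : ℂ)⁻¹ * ∑ x, w B n x⁻¹ y * f x
  map_add' f g := by
    funext y
    simp [Pi.add_apply, mul_add, Finset.sum_add_distrib]
  map_smul' r f := by
    funext y
    simp only [Pi.smul_apply, smul_eq_mul, RingHom.id_apply, Finset.mul_sum]
    exact Finset.sum_congr rfl fun x _ => by ring

variable {n}

lemma Fop_apply (f : Hn G n) (x : Fin n → G) : Fop B n f x = ∑ y, w B n x y * f y := rfl

lemma Gop_apply (f : Hn G n) (y : Fin n → G) :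
    Gop B n f y = (Fintype.card (Fin n → G) : ℂ)⁻¹ * ∑ x, w B n x⁻¹ y * f x := rfl

lemma cardn_ne_zero : (Fintype.card (Fin n → G) : ℂ) ≠ 0 :=
  Nat.cast_ne_zero.mpr Fintype.card_ne_zero

lemma sum_w_left (d : Fin n → G) :
    ∑ x : Fin n → G, w B n x d = if d = 1 then (Fintype.card (Fin n → G) : ℂ) else 0 := by
  unfold w
  exact B.orthoL d

lemma sum_w_right (d : Fin n → G) :
    ∑ y : Fin n → G, w B n d y = if d = 1 then (Fintype.card (Fin n → G) : ℂ) else 0 := by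
  unfold w
  exact B.orthoR d

lemma Gop_Fop : (Gop B n) ∘ₗ (Fop B n) = LinearMap.id := by
  apply LinearMap.ext; intro f
  funext y
  simp only [LinearMap.comp_apply, LinearMap.id_apply, Gop_apply, Fop_apply]
  set N : ℂ := (Fintype.card (Fin n → G) : ℂ) with hNdef
  calc N⁻¹ * ∑ x, w B n x⁻¹ y * (∑ z, w B n x z * f z)
      = N⁻¹ * ∑ x, ∑ z, w B n x (y⁻¹ * z) * f z := by
        congr 1
        refine Finset.sum_congr rfl fun x _ => ?_
        rw [Finset.mul_sum]
        exact Finset.sum_congr rfl fun z _ => by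
          rw [← mul_assoc, w_inv_swap, w_mul_right]
    _ = N⁻¹ * ∑ z, ∑ x, w B n x (y⁻¹ * z) * f z := by rw [Finset.sum_comm]
    _ = N⁻¹ * ∑ z, (if y⁻¹ * z = 1 then N else 0) * f z := by
        congr 1
        refine Finset.sum_congr rfl fun z _ => ?_
        rw [← Finset.sum_mul, sum_w_left]
    _ = N⁻¹ * (N * f y) := by
        congr 1
        have hcond : ∀ z : Fin n → G,
            (if y⁻¹ * z = 1 then N else 0) * f z = if z = y then N * f z else 0 := by
          intro z
          by_cases hz : z = y
          · subst hz; simp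
          · rw [if_neg hz, if_neg (fun h => hz (by rwa [inv_mul_eq_one, eq_comm] at h)), zero_mul]
        rw [Finset.sum_congr rfl fun z _ => hcond z]
        simp only [Finset.sum_ite_eq', Finset.mem_univ, if_true]
    _ = f y := by
        rw [← mul_assoc, inv_mul_cancel₀ (cardn_ne_zero (G := G) (n := n)), one_mul]

lemma Fop_Gop : (Fop B n) ∘ₗ (Gop B n) = LinearMap.id := by
  apply LinearMap.ext; intro f
  funext x
  simp only [LinearMap.comp_apply, LinearMap.id_apply, Gop_apply, Fop_apply]
  set N : ℂ := (Fintype.card (Fin n → G) : ℂ) with hNdef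
  calc ∑ y, w B n x y * (N⁻¹ * ∑ z, w B n z⁻¹ y * f z)
      = N⁻¹ * ∑ y, ∑ z, w B n (x * z⁻¹) y * f z := by
        rw [Finset.mul_sum]
        refine Finset.sum_congr rfl fun y _ => ?_
        rw [mul_left_comm]
        congr 1
        rw [Finset.mul_sum]
        exact Finset.sum_congr rfl fun z _ => by rw [← mul_assoc, w_mul_left]
    _ = N⁻¹ * ∑ z, ∑ y, w B n (x * z⁻¹) y * f z := by rw [Finset.sum_comm]
    _ = N⁻¹ * ∑ z, (if x * z⁻¹ = 1 then N else 0) * f z := by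
        congr 1
        refine Finset.sum_congr rfl fun z _ => ?_
        rw [← Finset.sum_mul, sum_w_right]
    _ = N⁻¹ * (N * f x) := by
        congr 1
        have hcond : ∀ z : Fin n → G,
            (if x * z⁻¹ = 1 then N else 0) * f z = if z = x then N * f z else 0 := by
          intro z
          by_cases hz : z = x
          · subst hz; simp
          · rw [if_neg hz, if_neg (fun h => hz (by rwa [mul_inv_eq_one, eq_comm] at h)), zero_mul]
        rw [Finset.sum_congr rfl fun z _ => hcond z]
        simp only [Finset.sum_ite_eq', Finset.mem_univ, if_true]
    _ = f x := by
        rw [← mul_assoc, inv_mul_cancel₀ (cardn_ne_zero (G := G) (n := n)), one_mul]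

variable (n)

/-- The Fourier transform as a linear equivalence. -/
def FEquiv : Hn G n ≃ₗ[ℂ] Hn G n :=
  LinearEquiv.ofLinear (Fop B n) (Gop B n) (Fop_Gop B) (Gop_Fop B)


variable {n}

/-! ### Intertwining identities -/

lemma Pop_apply (i : Fin n) (h : G) (f : Hn G n) (x : Fin n → G) :
    Pop G n i h f x = (if x i = h then 1 else 0) * f x := rfl

lemma Sop_apply (i j : Fin n) (h : G) (f : Hn G n) (x : Fin n → G) :
    Sop G n i j h f x = (if (x i)⁻¹ * x j = h then 1 else 0) * f x := rfl

lemma Rop_apply (i : Fin n) (g : G) (f : Hn G n) (x : Fin n → G) :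
    Rop G n i g f x = f (Function.update x i (x i * g⁻¹)) := rfl

lemma Qop_apply (i j : Fin n) (g : G) (f : Hn G n) (x : Fin n → G) :
    Qop G n i j g f x
      = f (Function.update (Function.update x i (x i * g)) j (g⁻¹ * x j)) := rfl

/-- The basis permutation underlying `Qop`, as an `Equiv`. -/
def qe (i j : Fin n) (hij : i ≠ j) (g : G) : (Fin n → G) ≃ (Fin n → G) where
  toFun x := Function.update (Function.update x i (x i * g)) j (g⁻¹ * x j)
  invFun x := Function.update (Function.update x i (x i * g⁻¹)) j (g * x j)
  left_inv x := by
    funext k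
    dsimp only
    set u := Function.update (Function.update x i (x i * g)) j (g⁻¹ * x j) with hu
    have huj : u j = g⁻¹ * x j := Function.update_self _ _ _
    have hui : u i = x i * g := by
      rw [hu, Function.update_of_ne hij, Function.update_self]
    rcases eq_or_ne k j with rfl | hkj
    · rw [Function.update_self, huj, mul_inv_cancel_left]
    · rw [Function.update_of_ne hkj]
      rcases eq_or_ne k i with rfl | hki
      · rw [Function.update_self, hui, mul_inv_cancel_right]
      · rw [Function.update_of_ne hki, hu, Function.update_of_ne hkj,
          Function.update_of_ne hki]
  right_inv x := by
    funext k
    dsimp only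
    set u := Function.update (Function.update x i (x i * g⁻¹)) j (g * x j) with hu
    have huj : u j = g * x j := Function.update_self _ _ _
    have hui : u i = x i * g⁻¹ := by
      rw [hu, Function.update_of_ne hij, Function.update_self]
    rcases eq_or_ne k j with rfl | hkj
    · rw [Function.update_self, huj, inv_mul_cancel_left]
    · rw [Function.update_of_ne hkj]
      rcases eq_or_ne k i with rfl | hki
      · rw [Function.update_self, hui, inv_mul_cancel_right]
      · rw [Function.update_of_ne hki, hu, Function.update_of_ne hkj,
          Function.update_of_ne hki]

lemma qe_symm_apply (i j : Fin n) (hij : i ≠ j) (g : G) (z : Fin n → G) :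
    (qe i j hij g).symm z
      = Function.update (Function.update z i (z i * g⁻¹)) j (g * z j) := rfl

lemma card1_ne_zero : (Fintype.card G : ℂ) ≠ 0 :=
  Nat.cast_ne_zero.mpr Fintype.card_ne_zero

/-- `F ∘ Q^{(g)}_{ij} = diag(χ((x i)⁻¹ x j, g)) ∘ F`. -/
lemma FQ (i j : Fin n) (hij : i ≠ j) (g : G) :
    (Fop B n) ∘ₗ (Qop G n i j g) =
      (diagOp G n fun x => B.chi ((x i)⁻¹ * x j) g) ∘ₗ (Fop B n) := by
  apply LinearMap.ext; intro f
  funext x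
  simp only [LinearMap.comp_apply, Fop_apply]
  have hL : ∀ y : Fin n → G, Qop G n i j g f y = f (qe i j hij g y) := fun y => rfl
  rw [Finset.sum_congr rfl fun y _ => by rw [hL y]]
  rw [Fintype.sum_equiv (qe i j hij g) _
    (fun z => w B n x ((qe i j hij g).symm z) * f z)
    (fun y => by simp)]
  have hdiag : diagOp G n (fun x => B.chi ((x i)⁻¹ * x j) g) (Fop B n f) x
      = B.chi ((x i)⁻¹ * x j) g * ∑ y, w B n x y * f y := rfl
  rw [hdiag, Finset.mul_sum]
  refine Finset.sum_congr rfl fun z _ => ?_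
  rw [qe_symm_apply, w_updR, w_updR]
  have h1 : Function.update z i (z i * g⁻¹) j = z j := Function.update_of_ne hij.symm _ _
  rw [h1]
  have h2 : g * z j * (z j)⁻¹ = g := mul_inv_cancel_right _ _
  have h3 : z i * g⁻¹ * (z i)⁻¹ = g⁻¹ := mul_inv_cancel_comm _ _
  rw [h2, h3, B.mul_left, B.chi_inv_swap]
  ring

/-- `F ∘ Q = (∑_h χ(h,g) S_h) ∘ F`. -/
lemma FQ' (i j : Fin n) (hij : i ≠ j) (g : G) :
    (Fop B n) ∘ₗ (Qop G n i j g) =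
      (∑ h : G, B.chi h g • Sop G n i j h) ∘ₗ (Fop B n) := by
  rw [FQ B i j hij g]
  congr 1
  apply LinearMap.ext; intro f
  funext x
  simp only [LinearMap.coe_sum, Finset.sum_apply, LinearMap.smul_apply, Pi.smul_apply,
    smul_eq_mul, Sop_apply]
  have hterm : ∀ h : G, B.chi h g * ((if (x i)⁻¹ * x j = h then 1 else 0) * f x)
      = if (x i)⁻¹ * x j = h then B.chi h g * f x else 0 := by
    intro h; split_ifs <;> ring
  rw [Finset.sum_congr rfl fun h _ => hterm h, Finset.sum_ite_eq, if_pos (Finset.mem_univ _)]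
  rfl

/-- `F ∘ P^h_i = (|G|⁻¹ ∑_g χ(g,h) R^g_i) ∘ F`. -/
lemma FP (i : Fin n) (h : G) :
    (Fop B n) ∘ₗ (Pop G n i h) =
      ((Fintype.card G : ℂ)⁻¹ • ∑ g : G, B.chi g h • Rop G n i g) ∘ₗ (Fop B n) := by
  apply LinearMap.ext; intro f
  funext x
  simp only [LinearMap.comp_apply, LinearMap.smul_apply, LinearMap.coe_sum,
    Finset.sum_apply, Pi.smul_apply, smul_eq_mul, Fop_apply, Pop_apply, Rop_apply]
  have key : ∀ g : G, (B.chi g h * ∑ y, w B n (Function.update x i (x i * g⁻¹)) y * f y)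
      = ∑ y, B.chi g (h * (y i)⁻¹) * (w B n x y * f y) := by
    intro g
    rw [Finset.mul_sum]
    refine Finset.sum_congr rfl fun y _ => ?_
    rw [w_updL]
    have h1 : x i * g⁻¹ * (x i)⁻¹ = g⁻¹ := mul_inv_cancel_comm _ _
    rw [h1, B.chi_inv_swap, B.mul_right]
    ring
  rw [Finset.sum_congr rfl fun g _ => key g, Finset.sum_comm, Finset.mul_sum]
  refine Finset.sum_congr rfl fun y _ => ?_
  rw [← Finset.sum_mul, B.sumL' (h * (y i)⁻¹)]
  by_cases hy : y i = h
  · rw [if_pos hy, if_pos (show h * (y i)⁻¹ = 1 by rw [hy, mul_inv_cancel])]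
    field_simp
  · rw [if_neg hy, if_neg (show ¬(h * (y i)⁻¹ = 1) from
      fun hc => hy (by rw [mul_inv_eq_one] at hc; exact hc.symm))]
    ring

/-- `F ∘ (∑_h χ(g⁻¹,h) P^h_i) = R^g_i ∘ F`. -/
lemma FR' (i : Fin n) (g : G) :
    (Fop B n) ∘ₗ (∑ h : G, B.chi g⁻¹ h • Pop G n i h) = (Rop G n i g) ∘ₗ (Fop B n) := by
  apply LinearMap.ext; intro f
  funext x
  simp only [LinearMap.comp_apply, Fop_apply, LinearMap.coe_sum, Finset.sum_apply,
    LinearMap.smul_apply, Pi.smul_apply, smul_eq_mul, Pop_apply, Rop_apply]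
  have hcol : ∀ y : Fin n → G,
      (∑ h : G, B.chi g⁻¹ h * ((if y i = h then 1 else 0) * f y)) = B.chi g⁻¹ (y i) * f y := by
    intro y
    have hterm : ∀ h : G, B.chi g⁻¹ h * ((if y i = h then 1 else 0) * f y)
        = if y i = h then B.chi g⁻¹ h * f y else 0 := by
      intro h; split_ifs <;> ring
    rw [Finset.sum_congr rfl fun h _ => hterm h, Finset.sum_ite_eq, if_pos (Finset.mem_univ _)]
  rw [Finset.sum_congr rfl fun y _ => by rw [hcol y]]
  refine Finset.sum_congr rfl fun y _ => ?_
  rw [w_updL]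
  have h1 : x i * g⁻¹ * (x i)⁻¹ = g⁻¹ := mul_inv_cancel_comm _ _
  rw [h1]
  ring

/-- `F ∘ (|G|⁻¹ ∑_g χ(h⁻¹,g) Q^{(g)}) = S^{(h)} ∘ F`. -/
lemma FS' (i j : Fin n) (hij : i ≠ j) (h : G) :
    (Fop B n) ∘ₗ ((Fintype.card G : ℂ)⁻¹ • ∑ g : G, B.chi h⁻¹ g • Qop G n i j g)
      = (Sop G n i j h) ∘ₗ (Fop B n) := by
  apply LinearMap.ext; intro f
  funext x
  simp only [LinearMap.comp_apply, LinearMap.smul_apply, LinearMap.coe_sum,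
    Finset.sum_apply, Pi.smul_apply, smul_eq_mul, Sop_apply]
  have hFQ : ∀ g : G, Fop B n (Qop G n i j g f) x
      = B.chi ((x i)⁻¹ * x j) g * Fop B n f x := by
    intro g
    have := LinearMap.congr_fun (FQ B i j hij g) f
    have h2 := congrFun this x
    exact h2
  rw [map_smul, map_sum]
  simp only [Pi.smul_apply, smul_eq_mul, Finset.sum_apply]
  rw [Finset.sum_congr rfl fun g _ => by rw [map_smul]]
  have : ∀ g : G, (B.chi h⁻¹ g • Fop B n (Qop G n i j g f)) x
      = B.chi (h⁻¹ * ((x i)⁻¹ * x j)) g * Fop B n f x := by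
    intro g
    rw [Pi.smul_apply, smul_eq_mul, hFQ g, ← mul_assoc, ← B.mul_left]
  rw [Finset.sum_congr rfl fun g _ => this g, ← Finset.sum_mul, B.sumR']
  by_cases hc : (x i)⁻¹ * x j = h
  · rw [if_pos (show h⁻¹ * ((x i)⁻¹ * x j) = 1 by rw [hc, inv_mul_cancel]), if_pos hc]
    field_simp
  · rw [if_neg (show ¬(h⁻¹ * ((x i)⁻¹ * x j) = 1) from
      fun hc' => hc (by rw [inv_mul_eq_one] at hc'; exact hc'.symm)), if_neg hc]
    try ring

/-! ### Conjugation plumbing -/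

/-- Conjugation by a linear automorphism, as an algebra automorphism of `End`. -/
def conjA (E : Hn G n ≃ₗ[ℂ] Hn G n) :
    Module.End ℂ (Hn G n) ≃ₐ[ℂ] Module.End ℂ (Hn G n) :=
  AlgEquiv.ofLinearEquiv E.conj
    (by simpa [Module.End.one_eq_id] using E.conj_id)
    (fun f g => by simpa [Module.End.mul_eq_comp] using E.conj_comp g f)

lemma conjA_eq (E : Hn G n ≃ₗ[ℂ] Hn G n) {A C : Module.End ℂ (Hn G n)}
    (hcomm : (E : Hn G n →ₗ[ℂ] Hn G n) ∘ₗ A = C ∘ₗ (E : Hn G n →ₗ[ℂ] Hn G n)) :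
    conjA E A = C := by
  apply LinearMap.ext; intro m
  show E.conj A m = C m
  rw [LinearEquiv.conj_apply_apply]
  have := LinearMap.congr_fun hcomm (E.symm m)
  simp only [LinearMap.comp_apply, LinearEquiv.coe_coe] at this
  rw [this, LinearEquiv.apply_symm_apply]

lemma conjA_symm_eq (E : Hn G n ≃ₗ[ℂ] Hn G n) {A C : Module.End ℂ (Hn G n)}
    (hcomm : (E : Hn G n →ₗ[ℂ] Hn G n) ∘ₗ A = C ∘ₗ (E : Hn G n →ₗ[ℂ] Hn G n)) :
    (conjA E).symm C = A :=
  (AlgEquiv.symm_apply_eq _).mpr (conjA_eq E hcomm).symm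

end Stmt14Aux

end Stmt14Aux

/-- for a finite abelian group `G`, the rough and smooth boundary
algebras are isomorphic as ℂ-algebras. -/
theorem stmt14 (hn : 1 ≤ n) :
    Nonempty (↥(DRough G n) ≃ₐ[ℂ] ↥(DSmooth G n)) := by
  classical
  obtain ⟨B⟩ := Stmt14Aux.exists_bichar (G := G)
  set E := Stmt14Aux.FEquiv B n with hE
  set Φ := Stmt14Aux.conjA E with hPhi
  have hEF : (E : Hn G n →ₗ[ℂ] Hn G n) = Stmt14Aux.Fop B n := rfl
  have hfwd : ∀ T ∈ ({T | ∃ (i : Fin n) (h : G), T = Pop G n i h} ∪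
      {T | ∃ (i j : Fin n) (g : G), (i : ℕ) + 1 = (j : ℕ) ∧ T = Qop G n i j g} :
      Set (Module.End ℂ (Hn G n))), Φ T ∈ DSmooth G n := by
    rintro T (⟨i, h, rfl⟩ | ⟨i, j, g, hij, rfl⟩)
    · rw [hPhi, Stmt14Aux.conjA_eq E (by rw [hEF]; exact Stmt14Aux.FP B i h)]
      refine Subalgebra.smul_mem _
        (Subalgebra.sum_mem _ fun g _ => Subalgebra.smul_mem _ ?_ _) _
      exact Algebra.subset_adjoin (Or.inl ⟨i, g, rfl⟩)
    · have hne : i ≠ j := fun hEq => by rw [hEq] at hij; omega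
      rw [hPhi, Stmt14Aux.conjA_eq E (by rw [hEF]; exact Stmt14Aux.FQ' B i j hne g)]
      refine Subalgebra.sum_mem _ fun h _ => Subalgebra.smul_mem _ ?_ _
      exact Algebra.subset_adjoin (Or.inr ⟨i, j, h, hij, rfl⟩)
  have hbwd : ∀ T ∈ ({T | ∃ (i : Fin n) (g : G), T = Rop G n i g} ∪
      {T | ∃ (i j : Fin n) (h : G), (i : ℕ) + 1 = (j : ℕ) ∧ T = Sop G n i j h} :
      Set (Module.End ℂ (Hn G n))), Φ.symm T ∈ DRough G n := by
    rintro T (⟨i, g, rfl⟩ | ⟨i, j, h, hij, rfl⟩)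
    · rw [hPhi, Stmt14Aux.conjA_symm_eq E (by rw [hEF]; exact Stmt14Aux.FR' B i g)]
      refine Subalgebra.sum_mem _ fun h _ => Subalgebra.smul_mem _ ?_ _
      exact Algebra.subset_adjoin (Or.inl ⟨i, h, rfl⟩)
    · have hne : i ≠ j := fun hEq => by rw [hEq] at hij; omega
      rw [hPhi, Stmt14Aux.conjA_symm_eq E (by rw [hEF]; exact Stmt14Aux.FS' B i j hne h)]
      refine Subalgebra.smul_mem _
        (Subalgebra.sum_mem _ fun g _ => Subalgebra.smul_mem _ ?_ _) _
      exact Algebra.subset_adjoin (Or.inr ⟨i, j, g, hij, rfl⟩)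
  have hmap : (DRough G n).map Φ.toAlgHom = DSmooth G n := by
    apply le_antisymm
    · rw [show DRough G n = Algebra.adjoin ℂ _ from rfl, AlgHom.map_adjoin]
      apply Algebra.adjoin_le
      rintro _ ⟨T, hT, rfl⟩
      exact hfwd T hT
    · show DSmooth G n ≤ _
      rw [show DSmooth G n = Algebra.adjoin ℂ _ from rfl]
      apply Algebra.adjoin_le
      intro T hT
      exact Subalgebra.mem_map.mpr ⟨Φ.symm T, hbwd T hT, by simp⟩
  exact ⟨(Subalgebra.equivMapOfInjective _ Φ.toAlgHom Φ.injective).trans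
    (Subalgebra.equivOfEq _ _ hmap)⟩
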